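/- Every tree with t ≥ 2 nodes and maximum degree at most 3 admits an edge cover of size at most ⌊(2t+1)/3⌋. -/

import Mathlib

/-- `C` is an edge cover of the graph `G`: a set of edges of `G` such that
every vertex is incident to at least one edge of `C`. -/
def IsEdgeCover {V : Type*} (G : SimpleGraph V) (C : Finset (Sym2 V)) : Prop :=
  ↑C ⊆ G.edgeSet ∧ ∀ v : V, ∃ e ∈ C, v ∈ e
open SimpleGraph Finset
set_option linter.unusedSectionVars false

namespace EC
variable {V : Type*} [DecidableEq V]

lemma isPath_concat {G : SimpleGraph V} {a b c : V} {p : G.Walk a b}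
    (hp : p.IsPath) (h : G.Adj b c) (hc : c ∉ p.support) : (p.concat h).IsPath := by
  rw [SimpleGraph.Walk.isPath_def, SimpleGraph.Walk.support_concat]
  simp [List.concat_eq_append, List.nodup_append, hp.support_nodup, hc]
  intro x hx hxc; exact hc (hxc ▸ hx)

lemma dist_split {G : SimpleGraph V} {r a y : V} (p : G.Walk r a)
    (hlen : p.length = G.dist r a) (hy : y ∈ p.support) :
    G.dist r y + G.dist y a ≤ G.dist r a := by
  have h1 : G.dist r y ≤ (p.takeUntil y hy).length := SimpleGraph.dist_le _
  have h2 : G.dist y a ≤ (p.dropUntil y hy).length := SimpleGraph.dist_le _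
  have h3 : (p.takeUntil y hy).length + (p.dropUntil y hy).length = p.length := by
    have := p.take_spec hy
    calc (p.takeUntil y hy).length + (p.dropUntil y hy).length
        = ((p.takeUntil y hy).append (p.dropUntil y hy)).length := by
          rw [SimpleGraph.Walk.length_append]
      _ = p.length := by rw [this]
  omega

lemma mem_shortest_lt {G : SimpleGraph V} (hc : G.Connected) {r a y : V} (p : G.Walk r a)
    (hlen : p.length = G.dist r a) (hy : y ∈ p.support) (hne : y ≠ a) :
    G.dist r y < G.dist r a := by
  have := dist_split p hlen hy
  have hpos : 0 < G.dist y a := (hc y a).pos_dist_of_ne hne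
  omega

lemma adj_dist_ne {G : SimpleGraph V} (hT : G.IsTree) (r : V) {a b : V}
    (hab : G.Adj a b) : G.dist r a ≠ G.dist r b := by
  intro he
  obtain ⟨pa, hpa, hla⟩ := hT.isConnected.exists_path_of_dist r a
  obtain ⟨pb, hpb, hlb⟩ := hT.isConnected.exists_path_of_dist r b
  have hbns : b ∉ pa.support := by
    intro hmem
    have := mem_shortest_lt hT.isConnected pa hla hmem hab.ne'
    omega
  have hq : (pa.concat hab).IsPath := isPath_concat hpa hab hbns
  have heq : pa.concat hab = pb := ((hT.existsUnique_path r b).unique hq hpb)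
  have : (pa.concat hab).length = pb.length := by rw [heq]
  rw [SimpleGraph.Walk.length_concat] at this
  omega

lemma unique_parent {G : SimpleGraph V} (hT : G.IsTree) (r : V) {a b c : V} {k : ℕ}
    (ha : G.Adj c a) (hb : G.Adj c b) (hda : G.dist r a = k) (hdb : G.dist r b = k)
    (hdc : G.dist r c = k + 1) : a = b := by
  obtain ⟨pa, hpa, hla⟩ := hT.isConnected.exists_path_of_dist r a
  obtain ⟨pb, hpb, hlb⟩ := hT.isConnected.exists_path_of_dist r b
  have hca : c ∉ pa.support := fun hmem => by
    have := dist_split pa hla hmem; omega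
  have hcb : c ∉ pb.support := fun hmem => by
    have := dist_split pb hlb hmem; omega
  have hqa : (pa.concat ha.symm).IsPath := isPath_concat hpa ha.symm hca
  have hqb : (pb.concat hb.symm).IsPath := isPath_concat hpb hb.symm hcb
  have heq : pa.concat ha.symm = pb.concat hb.symm :=
    ((hT.existsUnique_path r c).unique hqa hqb)
  have hs : (pa.concat ha.symm).reverse.support = (pb.concat hb.symm).reverse.support := by
    rw [heq]
  rw [SimpleGraph.Walk.reverse_concat, SimpleGraph.Walk.reverse_concat] at hs
  rw [SimpleGraph.Walk.support_cons, SimpleGraph.Walk.support_cons] at hs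
  have h1 := SimpleGraph.Walk.support_eq_cons pa.reverse
  have h2 := SimpleGraph.Walk.support_eq_cons pb.reverse
  rw [h1, h2] at hs
  exact (List.cons.injEq _ _ _ _ ▸ hs).2 |> fun h => (List.cons.injEq _ _ _ _ ▸ h).1

lemma reachable_induce {G : SimpleGraph V} {s : Set V} :
    ∀ {x y : V} (p : G.Walk x y) (_hs : ∀ z ∈ p.support, z ∈ s)
    (hx : x ∈ s) (hy : y ∈ s), (G.induce s).Reachable ⟨x, hx⟩ ⟨y, hy⟩ := by
  intro x y p
  induction p with
  | nil => intro _ hx hy; rfl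
  | cons h q ih =>
    intro hs hx hy
    rename_i a b c
    have hb : b ∈ s := hs b (by simp)
    refine SimpleGraph.Reachable.trans ?_ (ih (fun z hz => hs z (by simp [hz])) hb hy)
    exact SimpleGraph.Adj.reachable (by simpa using h)

lemma two_nbrs {G : SimpleGraph V} :
    ∀ {x y : V} (p : G.Walk x y) (_hp : p.IsPath) {m : V} (_hm : m ∈ p.support)
    (_hx : m ≠ x) (_hy : m ≠ y),
    ∃ a b, G.Adj m a ∧ G.Adj m b ∧ a ≠ b ∧ a ∈ p.support ∧ b ∈ p.support := by
  intro x y p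
  induction p with
  | nil => intro _ m hm hx _; simp at hm; exact absurd hm hx
  | cons h q ih =>
    intro hp m hm hx hy
    rename_i a b c
    rw [SimpleGraph.Walk.support_cons, List.mem_cons] at hm
    rcases hm with rfl | hm
    · exact absurd rfl hx
    by_cases hmb : m = b
    · subst hmb
      cases q with
      | nil => exact absurd rfl hy
      | cons h2 q2 =>
        refine ⟨a, _, h.symm, h2, ?_, by simp, ?_⟩
        · rintro rfl
          exact (SimpleGraph.Walk.cons_isPath_iff _ _ |>.mp hp).2 (by simp)
        · simp
    · obtain ⟨a', b', h1, h2, h3, h4, h5⟩ := ih hp.of_cons hm hmb hy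
      exact ⟨a', b', h1, h2, h3, by simp [h4], by simp [h5]⟩

lemma induce_isTree {G : SimpleGraph V} (hT : G.IsTree) {s : Set V} (hne : s.Nonempty)
    (hpath : ∀ (x y : V), x ∈ s → y ∈ s → ∀ p : G.Walk x y, p.IsPath →
      ∀ z ∈ p.support, z ∈ s) : (G.induce s).IsTree := by
  constructor
  · have : Nonempty s := ⟨⟨hne.choose, hne.choose_spec⟩⟩
    apply SimpleGraph.Connected.mk
    rintro ⟨x, hx⟩ ⟨y, hy⟩
    obtain ⟨p⟩ := hT.isConnected x y
    exact reachable_induce p.toPath.1 (hpath x y hx hy p.toPath.1 p.toPath.2) hx hy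
  · intro a w hw
    have := hw.map (f := SimpleGraph.Embedding.induce s |>.toHom)
      (Subtype.val_injective)
    exact hT.IsAcyclic _ this

lemma induce_degree_le [Fintype V] {G : SimpleGraph V} [DecidableRel G.Adj] {s : Set V}
    [Fintype s] [DecidableRel (G.induce s).Adj] (x : s) :
    (G.induce s).degree x ≤ G.degree x.1 := by
  rw [← SimpleGraph.card_neighborFinset_eq_degree, ← SimpleGraph.card_neighborFinset_eq_degree]
  apply Finset.card_le_card_of_injOn (fun y => y.1)
  · intro y hy
    simp only [Finset.mem_coe, SimpleGraph.mem_neighborFinset] at hy ⊢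
    exact hy
  · intro y _ z _ h
    exact Subtype.ext h

lemma cover_lift {G : SimpleGraph V} {s : Set V} [Fintype s]
    (C' : Finset (Sym2 s)) (hsub : ↑C' ⊆ (G.induce s).edgeSet)
    (hcov : ∀ v : s, ∃ e ∈ C', v ∈ e) :
    ∃ C : Finset (Sym2 V), ↑C ⊆ G.edgeSet ∧ (∀ x : V, x ∈ s → ∃ e ∈ C, x ∈ e) ∧
      C.card ≤ C'.card := by
  refine ⟨C'.image (Sym2.map (fun y : s => y.1)), ?_, ?_, Finset.card_image_le⟩
  · intro e he
    simp only [Finset.coe_image, Set.mem_image, Finset.mem_coe] at he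
    obtain ⟨e', he', rfl⟩ := he
    have := hsub he'
    induction e' with
    | _ a b =>
      simp only [SimpleGraph.mem_edgeSet] at this ⊢
      simpa using this
  · intro x hx
    obtain ⟨e, he, hxe⟩ := hcov ⟨x, hx⟩
    refine ⟨Sym2.map (fun y : s => y.1) e, Finset.mem_image_of_mem _ he, ?_⟩
    rw [Sym2.mem_map]
    exact ⟨⟨x, hx⟩, hxe, rfl⟩

/-- farthest vertices are leaves -/
lemma far_nbr {G : SimpleGraph V} (hT : G.IsTree) (r u : V)
    (hmax : ∀ x, G.dist r x ≤ G.dist r u) (hd : 1 ≤ G.dist r u) {x : V}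
    (hx : G.dist r x = G.dist r u) :
    (∀ a, G.Adj x a → G.dist r a = G.dist r u - 1) ∧
    (∀ a b, G.Adj x a → G.Adj x b → a = b) := by
  have part1 : ∀ a, G.Adj x a → G.dist r a = G.dist r u - 1 := by
    intro a ha
    have h1 : G.dist r a ≤ G.dist r u := hmax a
    have h2 : G.dist r a ≠ G.dist r x := (adj_dist_ne hT r ha.symm)
    have h3 : G.dist r x ≤ G.dist r a + G.dist a x :=
      hT.isConnected.dist_triangle
    have h4 : G.dist a x = 1 := SimpleGraph.dist_eq_one_iff_adj.mpr ha.symm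
    omega
  refine ⟨part1, fun a b ha hb => ?_⟩
  refine unique_parent hT r ha hb (part1 a ha) (part1 b hb) ?_
  omega

universe u

lemma key : ∀ (n : ℕ) (V : Type u) [Fintype V] [DecidableEq V] (G : SimpleGraph V)
    [DecidableRel G.Adj], Fintype.card V ≤ n → G.IsTree → 2 ≤ Fintype.card V →
    (∀ v : V, G.degree v ≤ 3) →
    ∃ C : Finset (Sym2 V), ↑C ⊆ G.edgeSet ∧ (∀ v : V, ∃ e ∈ C, v ∈ e) ∧
      C.card ≤ (2 * Fintype.card V + 1) / 3 := by
  intro n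
  induction n with
  | zero => intro V _ _ G _ hn _ h2 _; omega
  | succ n ih =>
    intro V instF instDE G instDR hn hT h2 hdeg
    -- pick a root and a farthest vertex u
    have hne : Nonempty V := Fintype.card_pos_iff.mp (by omega)
    obtain ⟨r⟩ := hne
    obtain ⟨u, -, hmax'⟩ := Finset.exists_max_image Finset.univ (G.dist r) ⟨r, Finset.mem_univ r⟩
    have hmax : ∀ x, G.dist r x ≤ G.dist r u := fun x => hmax' x (Finset.mem_univ x)
    have hd : 1 ≤ G.dist r u := by
      obtain ⟨x, hx⟩ := Fintype.exists_ne_of_one_lt_card (by omega) r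
      have := hT.isConnected.pos_dist_of_ne (Ne.symm hx)
      have := hmax x
      omega
    set d := G.dist r u with hd_def
    have hur : u ≠ r := by
      intro h; rw [h] at hd_def; simp [SimpleGraph.dist_self] at hd_def; omega
    -- the neighbor v of u on a shortest path
    obtain ⟨p, hp, hlen⟩ := hT.isConnected.exists_path_of_dist r u
    obtain ⟨v, huv, q, hq⟩ := SimpleGraph.Walk.exists_eq_cons_of_ne hur p.reverse
    have hqlen : q.length = d - 1 := by
      have h1 : p.reverse.length = d := by rw [SimpleGraph.Walk.length_reverse, hlen]
      rw [hq, SimpleGraph.Walk.length_cons] at h1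
      omega
    have hdv : G.dist r v = d - 1 := by
      have h1 : G.dist r v ≤ d - 1 := by
        have := SimpleGraph.dist_le q.reverse
        rw [SimpleGraph.Walk.length_reverse, hqlen] at this
        exact this
      have h2 : d ≤ G.dist r v + 1 := by
        have h3 : G.dist v u = 1 := SimpleGraph.dist_eq_one_iff_adj.mpr huv.symm
        have := hT.isConnected.dist_triangle (u := r) (v := v) (w := u)
        omega
      omega
    have hfar := fun (x : V) (hx : G.dist r x = d) => far_nbr hT r u hmax hd hx
    have huleaf : ∀ a b, G.Adj u a → G.Adj u b → a = b := (hfar u rfl).2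
    have hcard_nv : (G.neighborFinset v).card = G.degree v := G.card_neighborFinset_eq_degree v
    by_cases hA : ∃ u', G.Adj v u' ∧ u' ≠ u ∧ G.dist r u' = d
    · obtain ⟨u', hvu', hu'u, hdu'⟩ := hA
      have hu'leaf : ∀ a b, G.Adj u' a → G.Adj u' b → a = b := (hfar u' hdu').2
      have huvne : u ≠ v := huv.ne
      have hu'vne : u' ≠ v := hvu'.ne'
      have hTcard : ({u, u', v} : Finset V).card = 3 := by
        rw [Finset.card_insert_of_notMem (by simp [Ne.symm hu'u, huvne]),
          Finset.card_insert_of_notMem (by simp [hu'vne]), Finset.card_singleton]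
      set F : Finset V := Finset.univ \ {u, u', v} with hF
      have hFcard : F.card = Fintype.card V - 3 := by
        rw [hF, Finset.card_sdiff_of_subset (Finset.subset_univ _), Finset.card_univ, hTcard]
      have ht3 : 3 ≤ Fintype.card V := by
        rw [← hTcard, ← Finset.card_univ]; exact Finset.card_le_card (Finset.subset_univ _)
      have hmemF : ∀ x : V, x ∈ F ↔ (x ≠ u ∧ x ≠ u' ∧ x ≠ v) := by
        intro x; rw [hF]; simp [not_or]
      have hnotF : ∀ x : V, x ∉ F → x = u ∨ x = u' ∨ x = v := by
        intro x hx; rw [hmemF] at hx; tauto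
      -- edges to add
      have he1 : s(u, v) ∈ G.edgeSet := G.mem_edgeSet.mpr huv
      have he2 : s(u', v) ∈ G.edgeSet := G.mem_edgeSet.mpr hvu'.symm
      have hcov3 : ∀ x : V, x = u ∨ x = u' ∨ x = v →
          ∃ e ∈ ({s(u, v), s(u', v)} : Finset (Sym2 V)), x ∈ e := by
        rintro x (rfl | rfl | rfl)
        · exact ⟨s(x, v), by simp, by simp⟩
        · exact ⟨s(x, v), by simp, by simp⟩
        · exact ⟨s(u, x), by simp, by simp⟩
      have hpairle : ({s(u, v), s(u', v)} : Finset (Sym2 V)).card ≤ 2 :=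
        (Finset.card_insert_le _ _).trans (by simp)
      by_cases hF2 : 2 ≤ F.card
      · -- main branch: apply induction hypothesis
        have havoid : ∀ (x y : V), x ∈ (↑F : Set V) → y ∈ (↑F : Set V) →
            ∀ p' : G.Walk x y, p'.IsPath → ∀ z ∈ p'.support, z ∈ (↑F : Set V) := by
          intro x y hx hy p' hp' z hz
          rw [Finset.mem_coe, hmemF] at hx hy
          rw [Finset.mem_coe, hmemF]
          have hu_not : u ∉ p'.support := by
            intro hmem
            obtain ⟨a, b, h1, h2, hab, -, -⟩ :=
              two_nbrs p' hp' hmem (Ne.symm hx.1) (Ne.symm hy.1)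
            exact hab (huleaf a b h1 h2)
          have hu'_not : u' ∉ p'.support := by
            intro hmem
            obtain ⟨a, b, h1, h2, hab, -, -⟩ :=
              two_nbrs p' hp' hmem (Ne.symm hx.2.1) (Ne.symm hy.2.1)
            exact hab (hu'leaf a b h1 h2)
          refine ⟨?_, ?_, ?_⟩
          · rintro rfl; exact hu_not hz
          · rintro rfl; exact hu'_not hz
          · rintro rfl
            obtain ⟨a, b, h1, h2, hab, ha, hb⟩ :=
              two_nbrs p' hp' hz (Ne.symm hx.2.2) (Ne.symm hy.2.2)
            have hcard1 : (G.neighborFinset z \ {u, u'} : Finset V).card ≤ 1 := by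
              have hsub : ({u, u'} : Finset V) ⊆ G.neighborFinset z := by
                intro t ht
                simp only [Finset.mem_insert, Finset.mem_singleton] at ht
                rcases ht with rfl | rfl
                · exact (G.mem_neighborFinset _ _).mpr huv.symm
                · exact (G.mem_neighborFinset _ _).mpr hvu'
              have hsd := Finset.card_sdiff_of_subset hsub
              have hpair : ({u, u'} : Finset V).card = 2 := by
                rw [Finset.card_insert_of_notMem (by simp [hu'u.symm]), Finset.card_singleton]
              have hd3 := hdeg z
              have hnz := G.card_neighborFinset_eq_degree z
              omega
            have hamem : a ∈ G.neighborFinset z \ {u, u'} := by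
              rw [Finset.mem_sdiff, G.mem_neighborFinset]
              refine ⟨h1, ?_⟩
              simp only [Finset.mem_insert, Finset.mem_singleton]
              rintro (rfl | rfl)
              · exact hu_not ha
              · exact hu'_not ha
            have hbmem : b ∈ G.neighborFinset z \ {u, u'} := by
              rw [Finset.mem_sdiff, G.mem_neighborFinset]
              refine ⟨h2, ?_⟩
              simp only [Finset.mem_insert, Finset.mem_singleton]
              rintro (rfl | rfl)
              · exact hu_not hb
              · exact hu'_not hb
            exact hab (Finset.card_le_one.mp hcard1 a hamem b hbmem)
        have hFne : (↑F : Set V).Nonempty := by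
          obtain ⟨x, hx⟩ := Finset.card_pos.mp (lt_of_lt_of_le (by norm_num) hF2)
          exact ⟨x, hx⟩
        haveI hDR' : DecidableRel (G.induce (↑F : Set V)).Adj :=
          fun a b => inferInstanceAs (Decidable (G.Adj a.1 b.1))
        have htree := induce_isTree hT hFne havoid
        have hcards : Fintype.card (↑F : Set V) = F.card := Fintype.card_coe F
        obtain ⟨C', hC'sub, hC'cov, hC'card⟩ :=
          ih (↑F : Set V) (G.induce (↑F : Set V)) (by omega) htree (by omega)
            (fun x => le_trans (induce_degree_le x) (hdeg x.1))
        obtain ⟨C0, hC0sub, hC0cov, hC0card⟩ := cover_lift C' hC'sub hC'cov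
        refine ⟨C0 ∪ {s(u, v), s(u', v)}, ?_, ?_, ?_⟩
        · intro e he
          rw [Finset.mem_coe, Finset.mem_union] at he
          rcases he with he | he
          · exact hC0sub he
          · simp only [Finset.mem_insert, Finset.mem_singleton] at he
            rcases he with rfl | rfl
            · exact he1
            · exact he2
        · intro x
          by_cases hx : x ∈ F
          · obtain ⟨e, he, hxe⟩ := hC0cov x (Finset.mem_coe.mpr hx)
            exact ⟨e, Finset.mem_union_left _ he, hxe⟩
          · obtain ⟨e, he, hxe⟩ := hcov3 x (hnotF x hx)
            exact ⟨e, Finset.mem_union_right _ he, hxe⟩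
        · have h1 : (C0 ∪ {s(u, v), s(u', v)}).card ≤ C0.card + 2 :=
            le_trans (Finset.card_union_le _ _) (by omega)
          rw [hcards, hFcard] at hC'card
          omega
      · -- small cases: F.card ≤ 1
        by_cases hF0 : F.card = 0
        · -- the whole tree is {u, u', v}
          refine ⟨{s(u, v), s(u', v)}, ?_, ?_, ?_⟩
          · intro e he
            simp only [Finset.coe_insert, Set.mem_insert_iff, Finset.coe_singleton,
              Set.mem_singleton_iff] at he
            rcases he with rfl | rfl
            · exact he1
            · exact he2
          · intro x
            refine hcov3 x (hnotF x ?_)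
            intro hx
            rw [Finset.card_eq_zero] at hF0
            rw [hF0] at hx
            exact absurd hx (Finset.notMem_empty x)
          · omega
        · -- F = {w}, the whole tree is {u, u', v, w} and w is adjacent to v
          have hF1 : F.card = 1 := by omega
          obtain ⟨w, hw⟩ := Finset.card_eq_one.mp hF1
          have hwF : w ∈ F := by rw [hw]; exact Finset.mem_singleton_self w
          have hwprop := (hmemF w).mp hwF
          have ht4 : Fintype.card V = 4 := by omega
          -- w has a neighbor, which must be v
          obtain ⟨pw⟩ := hT.isConnected w v
          obtain ⟨z, hwz, qz, hqz⟩ :=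
            SimpleGraph.Walk.exists_eq_cons_of_ne hwprop.2.2 pw.toPath.1
          have hzv : z = v := by
            have hzne : z ≠ w := hwz.ne'
            have hz3 : z = u ∨ z = u' ∨ z = v := by
              refine hnotF z ?_
              intro hzF
              rw [hw, Finset.mem_singleton] at hzF
              exact hzne hzF
            rcases hz3 with rfl | rfl | rfl
            · exact absurd (huleaf w v hwz.symm huv) hwprop.2.2
            · exact absurd (hu'leaf w v hwz.symm hvu'.symm) hwprop.2.2
            · rfl
          have hwv : G.Adj v w := (hzv ▸ hwz).symm
          have he3 : s(v, w) ∈ G.edgeSet := G.mem_edgeSet.mpr hwv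
          refine ⟨{s(u, v), s(u', v), s(v, w)}, ?_, ?_, ?_⟩
          · intro e he
            simp only [Finset.coe_insert, Set.mem_insert_iff, Finset.coe_singleton,
              Set.mem_singleton_iff] at he
            rcases he with rfl | rfl | rfl
            · exact he1
            · exact he2
            · exact he3
          · intro x
            by_cases hx : x ∈ F
            · rw [hw, Finset.mem_singleton] at hx
              subst hx
              exact ⟨s(v, x), by simp, by simp⟩
            · obtain ⟨e, he, hxe⟩ := hcov3 x (hnotF x hx)
              simp only [Finset.mem_insert, Finset.mem_singleton] at he
              refine ⟨e, ?_, hxe⟩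
              simp only [Finset.mem_insert, Finset.mem_singleton]
              tauto
          · have : ({s(u, v), s(u', v), s(v, w)} : Finset (Sym2 V)).card ≤ 3 :=
              (Finset.card_insert_le _ _).trans
                (Nat.succ_le_succ ((Finset.card_insert_le _ _).trans (by simp)))
            omega
    · -- v has no other far neighbor
      push_neg at hA
      by_cases hB : ∃ w, G.Adj v w ∧ w ≠ u
      · obtain ⟨w, hvw, hwu⟩ := hB
        have e1 : G.dist r w ≤ d := hmax w
        have e2 : G.dist r w ≠ d := hA w hvw hwu
        have e3 : G.dist r w ≠ d - 1 := by
          have := adj_dist_ne hT r hvw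
          rw [hdv] at this
          exact Ne.symm this
        have e4 : d - 1 ≤ G.dist r w + 1 := by
          have h3 : G.dist w v = 1 := SimpleGraph.dist_eq_one_iff_adj.mpr hvw.symm
          have := hT.isConnected.dist_triangle (u := r) (v := w) (w := v)
          omega
        have e5 : G.dist r w ≤ (d - 1) + 1 := by
          have h3 : G.dist v w = 1 := SimpleGraph.dist_eq_one_iff_adj.mpr hvw
          have := hT.isConnected.dist_triangle (u := r) (v := v) (w := w)
          omega
        have e6 : G.dist r w = d - 2 ∧ 2 ≤ d := by omega
        have hNv : ∀ z, G.Adj v z → z = u ∨ z = w := by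
          intro z hz
          by_cases h1 : z = u
          · exact Or.inl h1
          right
          have f1 : G.dist r z ≤ d := hmax z
          have f2 : G.dist r z ≠ d := hA z hz h1
          have f3 : G.dist r z ≠ d - 1 := by
            have := adj_dist_ne hT r hz
            rw [hdv] at this
            exact Ne.symm this
          have f4 : d - 1 ≤ G.dist r z + 1 := by
            have h3 : G.dist z v = 1 := SimpleGraph.dist_eq_one_iff_adj.mpr hz.symm
            have := hT.isConnected.dist_triangle (u := r) (v := z) (w := v)
            omega
          have f5 : G.dist r z = d - 2 := by omega
          exact unique_parent hT r hz hvw f5 e6.1 (by omega)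
        have huvne : u ≠ v := huv.ne
        have hwvne : w ≠ v := hvw.ne'
        have hTcard : ({u, v} : Finset V).card = 2 := by
          rw [Finset.card_insert_of_notMem (by simp [huvne]), Finset.card_singleton]
        set F : Finset V := Finset.univ \ {u, v} with hF
        have hFcard : F.card = Fintype.card V - 2 := by
          rw [hF, Finset.card_sdiff_of_subset (Finset.subset_univ _), Finset.card_univ, hTcard]
        have hmemF : ∀ x : V, x ∈ F ↔ (x ≠ u ∧ x ≠ v) := by
          intro x; rw [hF]; simp [not_or]
        have hnotF : ∀ x : V, x ∉ F → x = u ∨ x = v := by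
          intro x hx; rw [hmemF] at hx; tauto
        have hwF : w ∈ F := (hmemF w).mpr ⟨hwu, hwvne⟩
        have he1 : s(u, v) ∈ G.edgeSet := G.mem_edgeSet.mpr huv
        have he3 : s(v, w) ∈ G.edgeSet := G.mem_edgeSet.mpr hvw
        by_cases hF2 : 2 ≤ F.card
        · have havoid : ∀ (x y : V), x ∈ (↑F : Set V) → y ∈ (↑F : Set V) →
              ∀ p' : G.Walk x y, p'.IsPath → ∀ z ∈ p'.support, z ∈ (↑F : Set V) := by
            intro x y hx hy p' hp' z hz
            rw [Finset.mem_coe, hmemF] at hx hy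
            rw [Finset.mem_coe, hmemF]
            have hu_not : u ∉ p'.support := by
              intro hmem
              obtain ⟨a, b, h1, h2, hab, -, -⟩ :=
                two_nbrs p' hp' hmem (Ne.symm hx.1) (Ne.symm hy.1)
              exact hab (huleaf a b h1 h2)
            refine ⟨?_, ?_⟩
            · rintro rfl; exact hu_not hz
            · rintro rfl
              obtain ⟨a, b, h1, h2, hab, ha, hb⟩ :=
                two_nbrs p' hp' hz (Ne.symm hx.2) (Ne.symm hy.2)
              have ha' : a = w := by
                rcases hNv a h1 with rfl | rfl
                · exact absurd ha hu_not
                · rfl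
              have hb' : b = w := by
                rcases hNv b h2 with rfl | rfl
                · exact absurd hb hu_not
                · rfl
              exact hab (ha'.trans hb'.symm)
          have hFne : (↑F : Set V).Nonempty := ⟨w, hwF⟩
          haveI hDR' : DecidableRel (G.induce (↑F : Set V)).Adj :=
            fun a b => inferInstanceAs (Decidable (G.Adj a.1 b.1))
          have htree := induce_isTree hT hFne havoid
          have hcards : Fintype.card (↑F : Set V) = F.card := Fintype.card_coe F
          have ht2 : 2 ≤ Fintype.card V := h2
          obtain ⟨C', hC'sub, hC'cov, hC'card⟩ :=
            ih (↑F : Set V) (G.induce (↑F : Set V)) (by omega) htree (by omega)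
              (fun x => le_trans (induce_degree_le x) (hdeg x.1))
          obtain ⟨C0, hC0sub, hC0cov, hC0card⟩ := cover_lift C' hC'sub hC'cov
          refine ⟨C0 ∪ {s(u, v)}, ?_, ?_, ?_⟩
          · intro e he
            rw [Finset.mem_coe, Finset.mem_union] at he
            rcases he with he | he
            · exact hC0sub he
            · rw [Finset.mem_singleton] at he
              subst he
              exact he1
          · intro x
            by_cases hx : x ∈ F
            · obtain ⟨e, he, hxe⟩ := hC0cov x (Finset.mem_coe.mpr hx)
              exact ⟨e, Finset.mem_union_left _ he, hxe⟩
            · rcases hnotF x hx with rfl | rfl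
              · exact ⟨s(x, v), Finset.mem_union_right _ (by simp), by simp⟩
              · exact ⟨s(u, x), Finset.mem_union_right _ (by simp), by simp⟩
          · have h1 : (C0 ∪ {s(u, v)}).card ≤ C0.card + 1 :=
              le_trans (Finset.card_union_le _ _) (by simp)
            rw [hcards, hFcard] at hC'card
            omega
        · -- F.card = 1, so F = {w} and the tree is the path u - v - w
          have hF1 : F.card = 1 := by
            have : 0 < F.card := Finset.card_pos.mpr ⟨w, hwF⟩
            omega
          have hFw : F = {w} := by
            rw [Finset.eq_singleton_iff_unique_mem]
            refine ⟨hwF, fun x hx => ?_⟩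
            obtain ⟨y, hy⟩ := Finset.card_eq_one.mp hF1
            rw [hy, Finset.mem_singleton] at hx hwF
            rw [hx, hwF]
          have ht3 : Fintype.card V = 3 := by
            have : 2 ≤ Fintype.card V := h2
            omega
          refine ⟨{s(u, v), s(v, w)}, ?_, ?_, ?_⟩
          · intro e he
            simp only [Finset.coe_insert, Set.mem_insert_iff, Finset.coe_singleton,
              Set.mem_singleton_iff] at he
            rcases he with rfl | rfl
            · exact he1
            · exact he3
          · intro x
            by_cases hx : x ∈ F
            · rw [hFw, Finset.mem_singleton] at hx
              subst hx
              exact ⟨s(v, x), by simp, by simp⟩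
            · rcases hnotF x hx with rfl | rfl
              · exact ⟨s(x, v), by simp, by simp⟩
              · exact ⟨s(u, x), by simp, by simp⟩
          · have : ({s(u, v), s(v, w)} : Finset (Sym2 V)).card ≤ 2 :=
              (Finset.card_insert_le _ _).trans (by simp)
            omega
      · -- v has no neighbor besides u : the tree is the single edge u - v
        push_neg at hB
        have hNv1 : ∀ z, G.Adj v z → z = u := fun z hz => hB z hz
        have huniv : ∀ x : V, x = u ∨ x = v := by
          intro x
          by_contra hx
          push_neg at hx
          obtain ⟨pw⟩ := hT.isConnected v x
          obtain ⟨z1, hvz1, q1, hq1⟩ :=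
            SimpleGraph.Walk.exists_eq_cons_of_ne (Ne.symm hx.2) pw.toPath.1
          have hz1 : z1 = u := hNv1 z1 hvz1
          subst hz1
          obtain ⟨z2, huz2, q2, hq2⟩ :=
            SimpleGraph.Walk.exists_eq_cons_of_ne (Ne.symm hx.1) q1
          have hz2 : z2 = v := huleaf z2 v huz2 huv
          subst hz2
          have hpath := pw.toPath.2
          rw [hq1, hq2] at hpath
          have hbad := (SimpleGraph.Walk.cons_isPath_iff _ _).mp hpath
          refine hbad.2 ?_
          rw [SimpleGraph.Walk.support_cons]
          exact List.mem_cons_of_mem _ q2.start_mem_support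
        refine ⟨{s(u, v)}, ?_, ?_, ?_⟩
        · intro e he
          simp only [Finset.coe_singleton, Set.mem_singleton_iff] at he
          subst he
          exact G.mem_edgeSet.mpr huv
        · intro x
          rcases huniv x with rfl | rfl
          · exact ⟨s(x, v), by simp, by simp⟩
          · exact ⟨s(u, x), by simp, by simp⟩
        · simp only [Finset.card_singleton]
          omega

end EC

/-- Every tree with `t ≥ 2` nodes and maximum degree at most 3 admits an edge
cover of size at most `⌊(2t+1)/3⌋`. -/
theorem tree_edgeCover_le {V : Type*} [Fintype V] [DecidableEq V]
    (G : SimpleGraph V) [DecidableRel G.Adj]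
    (hT : G.IsTree) (ht : 2 ≤ Fintype.card V) (hΔ : G.maxDegree ≤ 3) :
    ∃ C : Finset (Sym2 V), IsEdgeCover G C ∧
      C.card ≤ (2 * Fintype.card V + 1) / 3 := by
  obtain ⟨C, h1, h2, h3⟩ := EC.key (Fintype.card V) V G le_rfl hT ht
    (fun v => le_trans (G.degree_le_maxDegree v) hΔ)
  exact ⟨C, ⟨h1, h2⟩, h3⟩
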